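/- Let P be a permutation kC_p-module and m ∈ P a nonzero element with Tm ≠ 0 and dep(Tm) = 1. Then T^{p-1} m ≠ 0, and ⟨m⟩ is a direct summand of P isomorphic to kC_p. -/

import Mathlib

open Polynomial

noncomputable section

/-- `Mmod k i` is the `k[T]`-module `M_i = k[T]/(T^i)`. -/
abbrev Mmod (k : Type) [Field k] (i : ℕ) : Type :=
  Polynomial k ⧸ Ideal.span {(X : Polynomial k) ^ i}

namespace Stmt7Aux

variable {k : Type} [Field k]

lemma smul_mk (i : ℕ) (q f : Polynomial k) :
    q • (Ideal.Quotient.mk (Ideal.span {(X : Polynomial k) ^ i}) f) =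
      Ideal.Quotient.mk (Ideal.span {(X : Polynomial k) ^ i}) (q * f) := by
  rfl

lemma pow_smul_eq_zero (i j : ℕ) (h : i ≤ j) (x : Mmod k i) :
    (X : Polynomial k) ^ j • x = 0 := by
  obtain ⟨n, rfl⟩ := Nat.exists_eq_add_of_le h
  obtain ⟨f, rfl⟩ := Ideal.Quotient.mk_surjective x
  rw [smul_mk, Ideal.Quotient.eq_zero_iff_mem, Ideal.mem_span_singleton, pow_add]
  exact Dvd.dvd.mul_right (dvd_mul_right _ _) f

lemma smul_one (i : ℕ) (q : Polynomial k) :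
    q • (1 : Mmod k i) = Ideal.Quotient.mk (Ideal.span {(X : Polynomial k) ^ i}) q := by
  rw [show (1 : Mmod k i) = Ideal.Quotient.mk (Ideal.span {(X : Polynomial k) ^ i}) 1 from rfl,
    smul_mk, mul_one]

end Stmt7Aux

/-- A permutation `kC_p`-module: a direct sum of copies of `kC_p = k[T]/T^p`
and the trivial module `k = k[T]/T`. -/
def IsPermMod (k : Type) [Field k] (p : ℕ) (M : Type) [AddCommGroup M]
    [Module (Polynomial k) M] : Prop :=
  ∃ r s : ℕ,
    Nonempty (M ≃ₗ[Polynomial k] ((Fin r → Mmod k p) × (Fin s → Mmod k 1)))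

/-- `m` has depth `i`: `m ∈ T^i M` but `m ∉ T^{i+1} M`. -/
def HasDepth (k : Type) [Field k] {M : Type} [AddCommGroup M] [Module (Polynomial k) M]
    (i : ℕ) (m : M) : Prop :=
  (∃ y : M, m = (X : Polynomial k) ^ i • y) ∧ ¬ ∃ y : M, m = (X : Polynomial k) ^ (i + 1) • y

/-- `α` is the nilpotency index of `m` with respect to `T`. -/
def IsIndex (k : Type) [Field k] {M : Type} [AddCommGroup M] [Module (Polynomial k) M]
    (α : ℕ) (m : M) : Prop :=
  (X : Polynomial k) ^ α • m = 0 ∧ ∀ β < α, (X : Polynomial k) ^ β • m ≠ 0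

/-- `M` admits a resolution `0 → P_s → ⋯ → P_0 → M → 0` by permutation `kC_p`-modules. -/
def HasPermRes (k : Type) [Field k] (p : ℕ) :
    (s : ℕ) → (M : Type) → [AddCommGroup M] → [Module (Polynomial k) M] → Prop
  | 0, M, _, _ => IsPermMod k p M
  | (s + 1), M, _, _ =>
      ∃ (P : Type) (_ : AddCommGroup P) (_ : Module (Polynomial k) P)
        (f : P →ₗ[Polynomial k] M), IsPermMod k p P ∧ Function.Surjective f ∧
          HasPermRes k p s (LinearMap.ker f)

/-- The `p`-permutation dimension of `M`: minimal length of a permutation resolution. -/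
def ppdim (k : Type) [Field k] (p : ℕ) (M : Type) [AddCommGroup M]
    [Module (Polynomial k) M] : ℕ :=
  sInf {s | HasPermRes k p s M}

/-- The `p`-distance function: `f 1 = f p = 0` and
`f x = min (f (p-x)) (f (p-x+1)) + 1` for `2 ≤ x ≤ p-1`. -/
def IsSizeFun (p : ℕ) (f : ℕ → ℕ) : Prop :=
  f 1 = 0 ∧ f p = 0 ∧ ∀ x, 2 ≤ x → x ≤ p - 1 → f x = min (f (p - x)) (f (p - x + 1)) + 1

/-- Let `P` be a permutation `kC_p`-module and `m ∈ P` nonzero with `T m ≠ 0` and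
`dep (T m) = 1`. Then `T^{p-1} m ≠ 0` and `⟨m⟩` is a direct summand of `P`
isomorphic to `kC_p = k[T]/T^p`. -/
theorem stmt7 (k : Type) [Field k] (p : ℕ) (hp : p.Prime) [CharP k p]
    (P : Type) [AddCommGroup P] [Module (Polynomial k) P]
    (hP : IsPermMod k p P) (m : P) (hm : m ≠ 0)
    (hTm : (X : Polynomial k) • m ≠ 0) (hdep : HasDepth k 1 ((X : Polynomial k) • m)) :
    (X : Polynomial k) ^ (p - 1) • m ≠ 0 ∧
      (∃ N : Submodule (Polynomial k) P, IsCompl (Submodule.span (Polynomial k) {m}) N) ∧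
        Nonempty ((Submodule.span (Polynomial k) {m}) ≃ₗ[Polynomial k] Mmod k p) := by
  obtain ⟨r, s, ⟨e⟩⟩ := hP
  -- X^p kills P
  have hkillQ : ∀ y : (Fin r → Mmod k p) × (Fin s → Mmod k 1),
      (X : Polynomial k) ^ p • y = 0 := by
    rintro ⟨a, b⟩
    refine Prod.ext (funext fun i => ?_) (funext fun j => ?_)
    · exact Stmt7Aux.pow_smul_eq_zero p p le_rfl (a i)
    · exact Stmt7Aux.pow_smul_eq_zero 1 p hp.one_lt.le (b j)
  have hkillP : ∀ x : P, (X : Polynomial k) ^ p • x = 0 := by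
    intro x
    apply e.injective
    rw [map_smul, map_zero]
    exact hkillQ (e x)
  obtain ⟨-, hdep2⟩ := hdep
  set a := (e m).1 with ha
  set b := (e m).2 with hb
  -- find a coordinate with unit entry
  have hex : ∃ i, ¬ ∃ c : Mmod k p, a i = (X : Polynomial k) • c := by
    by_contra h
    push_neg at h
    choose c hc using h
    apply hdep2
    refine ⟨e.symm (c, 0), ?_⟩
    apply e.injective
    rw [map_smul, map_smul, e.apply_symm_apply]
    refine Prod.ext (funext fun i => ?_) (funext fun j => ?_)
    · show (X : Polynomial k) • a i = (X : Polynomial k) ^ (1 + 1) • c i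
      rw [hc i, ← mul_smul, ← pow_two]
    · show (X : Polynomial k) • b j = (X : Polynomial k) ^ (1 + 1) • (0 : Mmod k 1)
      rw [smul_zero]
      simpa using Stmt7Aux.pow_smul_eq_zero 1 1 le_rfl (b j)
  obtain ⟨i, hi⟩ := hex
  obtain ⟨f, hf⟩ := Ideal.Quotient.mk_surjective (a i)
  have hf0 : f.coeff 0 ≠ 0 := by
    intro h0
    obtain ⟨g, hg⟩ := Polynomial.X_dvd_iff.mpr h0
    exact hi ⟨Ideal.Quotient.mk _ g, by rw [← hf, hg, Stmt7Aux.smul_mk]⟩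
  -- a i is a unit
  have hnil : IsNilpotent
      (Ideal.Quotient.mk (Ideal.span {(X : Polynomial k) ^ p}) (f - C (f.coeff 0))) := by
    refine ⟨p, ?_⟩
    rw [← map_pow, Ideal.Quotient.eq_zero_iff_mem, Ideal.mem_span_singleton]
    exact pow_dvd_pow_of_dvd (Polynomial.X_dvd_iff.mpr (by simp)) p
  have hu : IsUnit (a i) := by
    rw [← hf]
    have hsplit : (Ideal.Quotient.mk (Ideal.span {(X : Polynomial k) ^ p}) f) =
        Ideal.Quotient.mk _ (C (f.coeff 0)) + Ideal.Quotient.mk _ (f - C (f.coeff 0)) := by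
      rw [← map_add]
      ring_nf
    rw [hsplit]
    exact hnil.isUnit_add_left_of_commute
      (IsUnit.map _ (Polynomial.isUnit_C.mpr (isUnit_iff_ne_zero.mpr hf0)))
      (Commute.all _ _)
  -- the retraction φ : P → kC_p
  set φ : P →ₗ[Polynomial k] Mmod k p :=
    (LinearMap.mulLeft (Polynomial k) (↑hu.unit⁻¹ : Mmod k p)) ∘ₗ
      (LinearMap.proj i) ∘ₗ (LinearMap.fst (Polynomial k) _ _) ∘ₗ e.toLinearMap with hφ
  have hφm : φ m = 1 := by
    simp only [hφ, LinearMap.coe_comp, Function.comp_apply, LinearEquiv.coe_coe,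
      LinearMap.fst_apply, LinearMap.proj_apply, LinearMap.mulLeft_apply]
    exact hu.val_inv_mul
  -- the section ψ : kC_p → P
  have hker : Ideal.span {(X : Polynomial k) ^ p} ≤
      LinearMap.ker (LinearMap.toSpanSingleton (Polynomial k) P m) := by
    rw [Ideal.span_le, Set.singleton_subset_iff]
    simp only [SetLike.mem_coe, LinearMap.mem_ker, LinearMap.toSpanSingleton_apply]
    exact hkillP m
  set ψ : Mmod k p →ₗ[Polynomial k] P :=
    Submodule.liftQ _ (LinearMap.toSpanSingleton (Polynomial k) P m) hker with hψdef
  have hψ : ∀ q : Polynomial k, ψ (Ideal.Quotient.mk _ q) = q • m := fun q => rfl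
  have hφψ : ∀ x : Mmod k p, φ (ψ x) = x := by
    intro x
    obtain ⟨q, rfl⟩ := Ideal.Quotient.mk_surjective x
    rw [hψ, map_smul, hφm, Stmt7Aux.smul_one]
  have hψinj : Function.Injective ψ := fun x y hxy => by rw [← hφψ x, ← hφψ y, hxy]
  have hrange : LinearMap.range ψ = Submodule.span (Polynomial k) {m} := by
    rw [hψdef, Submodule.range_liftQ, ← LinearMap.span_singleton_eq_range]
  refine ⟨?_, ⟨LinearMap.ker φ, ?_⟩, ?_⟩
  · intro h0
    have h1 : φ ((X : Polynomial k) ^ (p - 1) • m) = 0 := by rw [h0, map_zero]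
    rw [map_smul, hφm, Stmt7Aux.smul_one,
      Ideal.Quotient.eq_zero_iff_mem, Ideal.mem_span_singleton] at h1
    have h2 : p ≤ p - 1 := by
      have := Polynomial.natDegree_le_of_dvd h1 (pow_ne_zero _ Polynomial.X_ne_zero)
      simpa using this
    have := hp.one_lt
    omega
  · rw [← hrange]
    constructor
    · rw [Submodule.disjoint_def]
      rintro x ⟨y, rfl⟩ hker'
      rw [LinearMap.mem_ker] at hker'
      have : y = 0 := by rw [← hφψ y, hker']
      rw [this, map_zero]
    · rw [codisjoint_iff, eq_top_iff]
      intro x _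
      rw [Submodule.mem_sup]
      exact ⟨ψ (φ x), ⟨φ x, rfl⟩, x - ψ (φ x),
        by simp only [LinearMap.mem_ker, map_sub, hφψ, sub_self], by abel⟩
  · exact ⟨((LinearEquiv.ofInjective ψ hψinj).trans (LinearEquiv.ofEq _ _ hrange)).symm⟩
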